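/- For a unit vector ψ = (1/√3)(e^{iφ₊}|1⟩ + |0⟩ + e^{iφ₋}|−1⟩) of a spin-1 system, ψ is unbiased in the eigenbases of J_x, J_y and J_z simultaneously if and only if (φ₊, φ₋) ∈ {(π/4, 3π/4), (−π/4, −3π/4), (3π/4, π/4), (−3π/4, −π/4)} modulo 2π; in particular there exist exactly four perfect quantum protractors of this form for spin 1. -/

import Mathlib

open Complex Real BigOperators Matrix

noncomputable section

def J1x : Matrix (Fin 3) (Fin 3) ℂ :=
  (1 / (Real.sqrt 2 : ℂ)) • !![0, 1, 0; 1, 0, 1; 0, 1, 0]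
def J1y : Matrix (Fin 3) (Fin 3) ℂ :=
  (Complex.I / (Real.sqrt 2 : ℂ)) • !![0, -1, 0; 1, 0, -1; 0, 1, 0]
def J1z : Matrix (Fin 3) (Fin 3) ℂ := !![1, 0, 0; 0, 0, 0; 0, 0, -1]

/-- The spin-1 state with phases `φ₊, φ₋`. -/
def ψspin1 (φp φm : ℝ) : Fin 3 → ℂ :=
  fun i => (1 / (Real.sqrt 3 : ℂ)) *
    ![Complex.exp (Complex.I * φp), 1, Complex.exp (Complex.I * φm)] i

/- ### Auxiliary lemmas -/

lemma s2ne : ((Real.sqrt 2 : ℝ) : ℂ) ≠ 0 := by simp [Real.sqrt_eq_zero']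
lemma s2sq : ((Real.sqrt 2 : ℝ) : ℂ) * ((Real.sqrt 2 : ℝ) : ℂ) = 2 := by
  rw [← Complex.ofReal_mul, Real.mul_self_sqrt (by norm_num)]; norm_num
lemma s3r : Real.sqrt 3 * Real.sqrt 3 = 3 := Real.mul_self_sqrt (by norm_num)
lemma s2r : Real.sqrt 2 * Real.sqrt 2 = 2 := Real.mul_self_sqrt (by norm_num)
lemma expE (φ : ℝ) : Complex.exp (Complex.I * φ) =
    (Real.cos φ : ℂ) + (Real.sin φ : ℂ) * Complex.I := by
  rw [mul_comm, Complex.exp_mul_I, ← Complex.ofReal_cos, ← Complex.ofReal_sin]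
lemma pyth (φ : ℝ) : Real.cos φ ^ 2 + Real.sin φ ^ 2 = 1 := by
  rw [add_comm]; exact Real.sin_sq_add_cos_sq φ
lemma normSq_exp (φ : ℝ) : Complex.normSq (Complex.exp (Complex.I * φ)) = 1 := by
  rw [expE, Complex.normSq_add_mul_I]; linear_combination pyth φ

lemma goal_eq (φp φm : ℝ) (v : Fin 3 → ℂ) :
    ‖∑ i, star (v i) * ψspin1 φp φm i‖ ^ 2 =
    Complex.normSq ((starRingEnd ℂ) (v 0) * ((1 / (Real.sqrt 3 : ℂ)) * Complex.exp (Complex.I * φp))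
      + (starRingEnd ℂ) (v 1) * (1 / (Real.sqrt 3 : ℂ))
      + (starRingEnd ℂ) (v 2) * ((1 / (Real.sqrt 3 : ℂ)) * Complex.exp (Complex.I * φm))) := by
  simp [ψspin1, Fin.sum_univ_three, Complex.sq_norm]

lemma norm_eq (v : Fin 3 → ℂ) (hn : ∑ i, ‖v i‖ ^ 2 = 1) :
    Complex.normSq (v 0) + Complex.normSq (v 1) + Complex.normSq (v 2) = 1 := by
  simpa [Fin.sum_univ_three, Complex.sq_norm] using hn

lemma normSq_smul (w z : ℂ) :
    Complex.normSq ((starRingEnd ℂ) w * ((1 / (Real.sqrt 3 : ℂ)) * z)) =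
      Complex.normSq w * (Complex.normSq z / 3) := by
  simp only [_root_.map_mul, Complex.normSq_conj]
  rw [show Complex.normSq (1 / (Real.sqrt 3 : ℂ)) = 1 / 3 by
    rw [map_div₀, _root_.map_one, Complex.normSq_ofReal, s3r]]
  ring

/- ### The three explicit eigenvectors used for necessity -/

def vx1 : Fin 3 → ℂ := ![((1/2:ℝ):ℂ), (Real.sqrt 2 : ℂ)/2, ((1/2:ℝ):ℂ)]
def vx2 : Fin 3 → ℂ := ![((1/2:ℝ):ℂ), -((Real.sqrt 2 : ℂ)/2), ((1/2:ℝ):ℂ)]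
def vy1 : Fin 3 → ℂ := ![((1/2:ℝ):ℂ), Complex.I * (Real.sqrt 2 : ℂ)/2, -((1/2:ℝ):ℂ)]

lemma vx1_eig : J1x.mulVec vx1 = (1:ℂ) • vx1 := by
  funext i
  fin_cases i <;>
    simp [J1x, vx1, Matrix.mulVec, dotProduct, Fin.sum_univ_three] <;>
    field_simp <;>
    first
      | linear_combination (-2:ℂ) * s2sq
      | linear_combination (2:ℂ) * s2sq
      | linear_combination (-2*Complex.I) * s2sq
      | linear_combination (2*Complex.I) * s2sq
      | linear_combination (-2*((Real.sqrt 2:ℝ):ℂ)) * Complex.I_mul_I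
      | linear_combination (2*((Real.sqrt 2:ℝ):ℂ)) * Complex.I_mul_I
      | linear_combination (-1:ℂ) * s2sq
      | linear_combination (-1:ℂ) * Complex.I_mul_I
      | linear_combination Complex.I_mul_I

lemma vx2_eig : J1x.mulVec vx2 = (-1:ℂ) • vx2 := by
  funext i
  fin_cases i <;>
    simp [J1x, vx2, Matrix.mulVec, dotProduct, Fin.sum_univ_three] <;>
    field_simp <;>
    first
      | linear_combination (-2:ℂ) * s2sq
      | linear_combination (2:ℂ) * s2sq
      | linear_combination (-2*Complex.I) * s2sq
      | linear_combination (2*Complex.I) * s2sq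
      | linear_combination (-2*((Real.sqrt 2:ℝ):ℂ)) * Complex.I_mul_I
      | linear_combination (2*((Real.sqrt 2:ℝ):ℂ)) * Complex.I_mul_I
      | linear_combination (-1:ℂ) * s2sq
      | linear_combination (-1:ℂ) * Complex.I_mul_I
      | linear_combination Complex.I_mul_I

lemma vy1_eig : J1y.mulVec vy1 = (1:ℂ) • vy1 := by
  funext i
  fin_cases i <;>
    simp [J1y, vy1, Matrix.mulVec, dotProduct, Fin.sum_univ_three] <;>
    field_simp <;>
    first
      | linear_combination (-2:ℂ) * s2sq
      | linear_combination (2:ℂ) * s2sq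
      | linear_combination (-2*Complex.I) * s2sq
      | linear_combination (2*Complex.I) * s2sq
      | linear_combination (-2*((Real.sqrt 2:ℝ):ℂ)) * Complex.I_mul_I
      | linear_combination (2*((Real.sqrt 2:ℝ):ℂ)) * Complex.I_mul_I
      | linear_combination (-1:ℂ) * s2sq
      | linear_combination (-1:ℂ) * Complex.I_mul_I
      | linear_combination Complex.I_mul_I

lemma vx1_norm : ∑ i, ‖vx1 i‖ ^ 2 = 1 := by
  simp [vx1, Fin.sum_univ_three, Complex.sq_norm, map_div₀]
  norm_num

lemma vx2_norm : ∑ i, ‖vx2 i‖ ^ 2 = 1 := by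
  simp [vx2, Fin.sum_univ_three, Complex.sq_norm, map_div₀]
  norm_num

lemma vy1_norm : ∑ i, ‖vy1 i‖ ^ 2 = 1 := by
  simp [vy1, Fin.sum_univ_three, Complex.sq_norm, map_div₀, _root_.map_mul]
  norm_num

/- ### Necessity: the unbiasedness hypothesis forces the trig conditions -/

lemma forward_trig (φp φm : ℝ)
    (hyp : ∀ A ∈ ({J1x, J1y, J1z} : Set (Matrix (Fin 3) (Fin 3) ℂ)),
      ∀ (t : ℂ) (v : Fin 3 → ℂ), A.mulVec v = t • v → (∑ i, ‖v i‖ ^ 2 = 1) →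
        ‖∑ i, star (v i) * ψspin1 φp φm i‖ ^ 2 = 1 / 3) :
    Real.cos φp * Real.cos φm + Real.sin φp * Real.sin φm = 0 ∧
    Real.cos φp + Real.cos φm = 0 ∧ Real.sin φp = Real.sin φm := by
  have hx1 := hyp J1x (by simp) 1 vx1 vx1_eig vx1_norm
  have hx2 := hyp J1x (by simp) (-1) vx2 vx2_eig vx2_norm
  have hy1 := hyp J1y (Set.mem_insert_iff.mpr (Or.inr (Set.mem_insert _ _))) 1 vy1 vy1_eig vy1_norm
  rw [goal_eq] at hx1 hx2 hy1
  simp only [vx1, vx2, vy1, Matrix.cons_val_zero, Matrix.cons_val_one, Matrix.head_cons,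
    Matrix.cons_val_two, Matrix.tail_cons] at hx1 hx2 hy1
  rw [show (starRingEnd ℂ) (((1/2:ℝ):ℂ)) * (1 / (Real.sqrt 3:ℂ) * Complex.exp (Complex.I * φp)) +
      (starRingEnd ℂ) ((Real.sqrt 2:ℂ)/2) * (1 / (Real.sqrt 3:ℂ)) +
      (starRingEnd ℂ) (((1/2:ℝ):ℂ)) * (1 / (Real.sqrt 3:ℂ) * Complex.exp (Complex.I * φm)) =
      (starRingEnd ℂ) (((1/2:ℝ):ℂ)) * (1 / (Real.sqrt 3:ℂ) *
        (Complex.exp (Complex.I * φp) + (Real.sqrt 2:ℂ) + Complex.exp (Complex.I * φm)))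
      from by simp only [_root_.map_mul, map_div₀, map_ofNat, Complex.conj_ofReal]; push_cast; ring,
    normSq_smul, Complex.normSq_ofReal] at hx1
  rw [show (starRingEnd ℂ) (((1/2:ℝ):ℂ)) * (1 / (Real.sqrt 3:ℂ) * Complex.exp (Complex.I * φp)) +
      (starRingEnd ℂ) (-((Real.sqrt 2:ℂ)/2)) * (1 / (Real.sqrt 3:ℂ)) +
      (starRingEnd ℂ) (((1/2:ℝ):ℂ)) * (1 / (Real.sqrt 3:ℂ) * Complex.exp (Complex.I * φm)) =
      (starRingEnd ℂ) (((1/2:ℝ):ℂ)) * (1 / (Real.sqrt 3:ℂ) *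
        (Complex.exp (Complex.I * φp) - (Real.sqrt 2:ℂ) + Complex.exp (Complex.I * φm)))
      from by simp only [_root_.map_mul, map_div₀, map_ofNat, map_neg, Complex.conj_ofReal]
              push_cast; ring,
    normSq_smul, Complex.normSq_ofReal] at hx2
  rw [show (starRingEnd ℂ) (((1/2:ℝ):ℂ)) * (1 / (Real.sqrt 3:ℂ) * Complex.exp (Complex.I * φp)) +
      (starRingEnd ℂ) (Complex.I * (Real.sqrt 2:ℂ)/2) * (1 / (Real.sqrt 3:ℂ)) +
      (starRingEnd ℂ) (-((1/2:ℝ):ℂ)) * (1 / (Real.sqrt 3:ℂ) * Complex.exp (Complex.I * φm)) =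
      (starRingEnd ℂ) (((1/2:ℝ):ℂ)) * (1 / (Real.sqrt 3:ℂ) *
        (Complex.exp (Complex.I * φp) - (Real.sqrt 2:ℂ) * Complex.I
          - Complex.exp (Complex.I * φm)))
      from by simp only [_root_.map_mul, map_div₀, map_ofNat, map_neg, Complex.conj_ofReal, Complex.conj_I]
              push_cast; ring,
    normSq_smul, Complex.normSq_ofReal] at hy1
  rw [expE φp, expE φm] at hx1 hx2 hy1
  rw [show ((Real.cos φp:ℂ) + (Real.sin φp:ℂ) * Complex.I) + (Real.sqrt 2:ℂ) +
      ((Real.cos φm:ℂ) + (Real.sin φm:ℂ) * Complex.I) =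
      ((Real.cos φp + Real.sqrt 2 + Real.cos φm : ℝ) : ℂ) +
        ((Real.sin φp + Real.sin φm : ℝ):ℂ) * Complex.I from by push_cast; ring,
    Complex.normSq_add_mul_I] at hx1
  rw [show ((Real.cos φp:ℂ) + (Real.sin φp:ℂ) * Complex.I) - (Real.sqrt 2:ℂ) +
      ((Real.cos φm:ℂ) + (Real.sin φm:ℂ) * Complex.I) =
      ((Real.cos φp - Real.sqrt 2 + Real.cos φm : ℝ) : ℂ) +
        ((Real.sin φp + Real.sin φm : ℝ):ℂ) * Complex.I from by push_cast; ring,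
    Complex.normSq_add_mul_I] at hx2
  rw [show ((Real.cos φp:ℂ) + (Real.sin φp:ℂ) * Complex.I) - (Real.sqrt 2:ℂ) * Complex.I -
      ((Real.cos φm:ℂ) + (Real.sin φm:ℂ) * Complex.I) =
      ((Real.cos φp - Real.cos φm : ℝ) : ℂ) +
        ((Real.sin φp - Real.sin φm - Real.sqrt 2 : ℝ):ℂ) * Complex.I from by push_cast; ring,
    Complex.normSq_add_mul_I] at hy1
  have R1 : (Real.cos φp + Real.sqrt 2 + Real.cos φm)^2 + (Real.sin φp + Real.sin φm)^2 = 4 := by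
    linarith
  have R2 : (Real.cos φp - Real.sqrt 2 + Real.cos φm)^2 + (Real.sin φp + Real.sin φm)^2 = 4 := by
    linarith
  have R3 : (Real.cos φp - Real.cos φm)^2 + (Real.sin φp - Real.sin φm - Real.sqrt 2)^2 = 4 := by
    linarith
  have hs2pos : (0:ℝ) < Real.sqrt 2 := Real.sqrt_pos.2 (by norm_num)
  have C2 : Real.cos φp + Real.cos φm = 0 := by
    have h4 : (4 * Real.sqrt 2) * (Real.cos φp + Real.cos φm) = 0 := by
      linear_combination R1 - R2
    rcases mul_eq_zero.1 h4 with h' | h'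
    · nlinarith
    · exact h'
  have C1 : Real.cos φp * Real.cos φm + Real.sin φp * Real.sin φm = 0 := by
    linear_combination (R1 + R2)/4 - s2r/2 - pyth φp / 2 - pyth φm / 2
  have C3 : Real.sin φp = Real.sin φm := by
    have h4 : Real.sqrt 2 * (Real.sin φp - Real.sin φm) = 0 := by
      linear_combination (-1/2)*R3 + pyth φp /2 + pyth φm /2 + s2r/2 - C1
    rcases mul_eq_zero.1 h4 with h' | h'
    · nlinarith
    · linarith
  exact ⟨C1, C2, C3⟩

/- ### Trigonometric classification -/

lemma angle_eq (θ α : ℝ)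
    (h : Real.cos θ * Real.cos α + Real.sin θ * Real.sin α = 1) :
    ∃ n : ℤ, θ = α + 2 * Real.pi * n := by
  have hc : Real.cos (θ - α) = 1 := by rw [Real.cos_sub]; linarith
  obtain ⟨n, hn⟩ := (Real.cos_eq_one_iff _).1 hc
  exact ⟨n, by linear_combination -hn⟩

lemma cosv1 : Real.cos (Real.pi/4) = Real.sqrt 2/2 := Real.cos_pi_div_four
lemma sinv1 : Real.sin (Real.pi/4) = Real.sqrt 2/2 := Real.sin_pi_div_four
lemma cosv3 : Real.cos (3*Real.pi/4) = -(Real.sqrt 2/2) := by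
  rw [show (3*Real.pi/4 : ℝ) = Real.pi - Real.pi/4 by ring, Real.cos_pi_sub, cosv1]
lemma sinv3 : Real.sin (3*Real.pi/4) = Real.sqrt 2/2 := by
  rw [show (3*Real.pi/4 : ℝ) = Real.pi - Real.pi/4 by ring, Real.sin_pi_sub, sinv1]
lemma cosvn1 : Real.cos (-(Real.pi/4)) = Real.sqrt 2/2 := by rw [Real.cos_neg, cosv1]
lemma sinvn1 : Real.sin (-(Real.pi/4)) = -(Real.sqrt 2/2) := by rw [Real.sin_neg, sinv1]
lemma cosvn3 : Real.cos (-(3*Real.pi/4)) = -(Real.sqrt 2/2) := by rw [Real.cos_neg, cosv3]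
lemma sinvn3 : Real.sin (-(3*Real.pi/4)) = -(Real.sqrt 2/2) := by rw [Real.sin_neg, sinv3]

lemma hr2 : (Real.sqrt 2/2)^2 = 1/2 := by linear_combination s2r/4

lemma shift_cos (x : ℝ) (n : ℤ) : Real.cos (x + 2*Real.pi*n) = Real.cos x := by
  rw [show x + 2*Real.pi*(n:ℝ) = x + (n:ℝ)*(2*Real.pi) by ring]
  exact Real.cos_add_int_mul_two_pi x n
lemma shift_sin (x : ℝ) (n : ℤ) : Real.sin (x + 2*Real.pi*n) = Real.sin x := by
  rw [show x + 2*Real.pi*(n:ℝ) = x + (n:ℝ)*(2*Real.pi) by ring]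
  exact Real.sin_add_int_mul_two_pi x n

lemma trig_forward (φp φm : ℝ)
    (C1 : Real.cos φp * Real.cos φm + Real.sin φp * Real.sin φm = 0)
    (C2 : Real.cos φp + Real.cos φm = 0)
    (C3 : Real.sin φp = Real.sin φm) :
    (∃ a b : ℤ,
      (φp = Real.pi / 4 + 2 * Real.pi * a ∧ φm = 3 * Real.pi / 4 + 2 * Real.pi * b) ∨
      (φp = -(Real.pi / 4) + 2 * Real.pi * a ∧ φm = -(3 * Real.pi / 4) + 2 * Real.pi * b) ∨
      (φp = 3 * Real.pi / 4 + 2 * Real.pi * a ∧ φm = Real.pi / 4 + 2 * Real.pi * b) ∨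
      (φp = -(3 * Real.pi / 4) + 2 * Real.pi * a ∧ φm = -(Real.pi / 4) + 2 * Real.pi * b)) := by
  have e1 : Real.cos φm^2 = 1/2 := by
    linear_combination (pyth φm)/2 - C1/2 + (Real.cos φm/2)*C2 + (Real.sin φm/2)*C3
  have e2 : Real.sin φm^2 = 1/2 := by
    linear_combination (pyth φm)/2 + C1/2 - (Real.cos φm/2)*C2 - (Real.sin φm/2)*C3
  have hcm : Real.cos φm = Real.sqrt 2/2 ∨ Real.cos φm = -(Real.sqrt 2/2) := by
    rcases mul_eq_zero.1 (show (Real.cos φm - Real.sqrt 2/2)*(Real.cos φm + Real.sqrt 2/2) = 0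
      by linear_combination e1 - hr2) with h' | h'
    · exact Or.inl (by linarith)
    · exact Or.inr (by linarith)
  have hsm : Real.sin φm = Real.sqrt 2/2 ∨ Real.sin φm = -(Real.sqrt 2/2) := by
    rcases mul_eq_zero.1 (show (Real.sin φm - Real.sqrt 2/2)*(Real.sin φm + Real.sqrt 2/2) = 0
      by linear_combination e2 - hr2) with h' | h'
    · exact Or.inl (by linarith)
    · exact Or.inr (by linarith)
  have hcp : Real.cos φp = -Real.cos φm := by linarith
  rcases hcm with hm1 | hm1 <;> rcases hsm with hm2 | hm2
  · -- cos φm = r, sin φm = r : φm ≡ π/4, φp ≡ 3π/4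
    obtain ⟨b, hb⟩ := angle_eq φm (Real.pi/4)
      (by rw [cosv1, sinv1, hm1, hm2]; linear_combination s2r/2)
    obtain ⟨a, ha⟩ := angle_eq φp (3*Real.pi/4)
      (by rw [cosv3, sinv3, hcp, hm1, C3, hm2]; linear_combination s2r/2)
    exact ⟨a, b, Or.inr (Or.inr (Or.inl ⟨by linarith [ha], by linarith [hb]⟩))⟩
  · -- cos φm = r, sin φm = -r : φm ≡ -π/4, φp ≡ -3π/4
    obtain ⟨b, hb⟩ := angle_eq φm (-(Real.pi/4))
      (by rw [cosvn1, sinvn1, hm1, hm2]; linear_combination s2r/2)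
    obtain ⟨a, ha⟩ := angle_eq φp (-(3*Real.pi/4))
      (by rw [cosvn3, sinvn3, hcp, hm1, C3, hm2]; linear_combination s2r/2)
    exact ⟨a, b, Or.inr (Or.inr (Or.inr ⟨by linarith [ha], by linarith [hb]⟩))⟩
  · -- cos φm = -r, sin φm = r : φm ≡ 3π/4, φp ≡ π/4
    obtain ⟨b, hb⟩ := angle_eq φm (3*Real.pi/4)
      (by rw [cosv3, sinv3, hm1, hm2]; linear_combination s2r/2)
    obtain ⟨a, ha⟩ := angle_eq φp (Real.pi/4)
      (by rw [cosv1, sinv1, hcp, hm1, C3, hm2]; linear_combination s2r/2)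
    exact ⟨a, b, Or.inl ⟨by linarith [ha], by linarith [hb]⟩⟩
  · -- cos φm = -r, sin φm = -r : φm ≡ -3π/4, φp ≡ -π/4
    obtain ⟨b, hb⟩ := angle_eq φm (-(3*Real.pi/4))
      (by rw [cosvn3, sinvn3, hm1, hm2]; linear_combination s2r/2)
    obtain ⟨a, ha⟩ := angle_eq φp (-(Real.pi/4))
      (by rw [cosvn1, sinvn1, hcp, hm1, C3, hm2]; linear_combination s2r/2)
    exact ⟨a, b, Or.inr (Or.inl ⟨by linarith [ha], by linarith [hb]⟩)⟩

lemma trig_backward (φp φm : ℝ)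
    (h : ∃ a b : ℤ,
      (φp = Real.pi / 4 + 2 * Real.pi * a ∧ φm = 3 * Real.pi / 4 + 2 * Real.pi * b) ∨
      (φp = -(Real.pi / 4) + 2 * Real.pi * a ∧ φm = -(3 * Real.pi / 4) + 2 * Real.pi * b) ∨
      (φp = 3 * Real.pi / 4 + 2 * Real.pi * a ∧ φm = Real.pi / 4 + 2 * Real.pi * b) ∨
      (φp = -(3 * Real.pi / 4) + 2 * Real.pi * a ∧ φm = -(Real.pi / 4) + 2 * Real.pi * b)) :
    Real.cos φp * Real.cos φm + Real.sin φp * Real.sin φm = 0 ∧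
    Real.cos φp + Real.cos φm = 0 ∧ Real.sin φp = Real.sin φm := by
  obtain ⟨a, b, hc⟩ := h
  rcases hc with ⟨hp, hm⟩ | ⟨hp, hm⟩ | ⟨hp, hm⟩ | ⟨hp, hm⟩ <;> subst hp <;> subst hm <;>
    rw [show (3 * Real.pi / 4 : ℝ) = 3*Real.pi/4 from rfl] <;>
    simp only [shift_cos, shift_sin] <;>
    first
    | (rw [show (Real.pi/4 : ℝ) = Real.pi/4 from rfl]
       constructor
       · rw [cosv1, cosv3, sinv1, sinv3]; ring
       · exact ⟨by rw [cosv1, cosv3]; ring, by rw [sinv1, sinv3]⟩)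
    | (constructor
       · rw [cosvn1, cosvn3, sinvn1, sinvn3]; ring
       · exact ⟨by rw [cosvn1, cosvn3]; ring, by rw [sinvn1, sinvn3]⟩)
    | (constructor
       · rw [cosv1, cosv3, sinv1, sinv3]; ring
       · exact ⟨by rw [cosv1, cosv3]; ring, by rw [sinv1, sinv3]⟩)

/- ### Sufficiency for each matrix -/

lemma keyx (φp φm : ℝ)
    (C1 : Real.cos φp * Real.cos φm + Real.sin φp * Real.sin φm = 0)
    (C2 : Real.cos φp + Real.cos φm = 0)
    (t : ℂ) (v : Fin 3 → ℂ) (h : J1x.mulVec v = t • v) (hn : ∑ i, ‖v i‖ ^ 2 = 1) :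
    ‖∑ i, star (v i) * ψspin1 φp φm i‖ ^ 2 = 1 / 3 := by
  have h0 := congrFun h 0
  have h1 := congrFun h 1
  have h2 := congrFun h 2
  simp [J1x, Matrix.mulVec, dotProduct, Fin.sum_univ_three] at h0 h1 h2
  field_simp [s2ne] at h0 h1 h2
  have hn' := norm_eq v hn
  rw [goal_eq]
  by_cases ht : t = 0
  · subst ht
    simp only [zero_mul, mul_zero] at h0 h1 h2
    have hv2 : v 2 = -v 0 := by linear_combination h1
    rw [h0, hv2] at hn' ⊢
    simp only [map_zero, zero_mul, add_zero, map_neg, Complex.normSq_neg, neg_mul] at hn' ⊢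
    have hw : Complex.normSq (v 0) = 1/2 := by linarith
    rw [show (starRingEnd ℂ) (v 0) * (1 / (Real.sqrt 3:ℂ) * Complex.exp (Complex.I * φp)) +
        -((starRingEnd ℂ) (v 0) * (1 / (Real.sqrt 3:ℂ) * Complex.exp (Complex.I * φm))) =
        (starRingEnd ℂ) (v 0) * (1 / (Real.sqrt 3:ℂ) *
          (Complex.exp (Complex.I * φp) - Complex.exp (Complex.I * φm))) from by ring,
      normSq_smul, hw]
    rw [expE, expE, show ((Real.cos φp:ℂ) + (Real.sin φp:ℂ) * Complex.I) -
        ((Real.cos φm:ℂ) + (Real.sin φm:ℂ) * Complex.I) =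
        ((Real.cos φp - Real.cos φm : ℝ) : ℂ) + ((Real.sin φp - Real.sin φm : ℝ):ℂ) * Complex.I
        from by push_cast; ring, Complex.normSq_add_mul_I]
    rw [show (Real.cos φp - Real.cos φm)^2 + (Real.sin φp - Real.sin φm)^2 = 2 from by
      linear_combination pyth φp + pyth φm - 2 * C1]
    norm_num
  · have h02 : v 0 = v 2 :=
      mul_left_cancel₀ (mul_ne_zero s2ne ht) (h0.symm.trans h2)
    rw [h0] at h1
    rw [← h02] at h1 hn' ⊢
    have hv0 : v 0 ≠ 0 := by
      intro hz
      rw [hz] at h0 hn'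
      simp only [mul_zero, zero_mul] at h0
      rw [h0] at hn'
      simp at hn'
    have ht2 : t * t = 1 := by
      have hkey : (t * t - 1) * v 0 = 0 := by
        linear_combination (-(1:ℂ)/2) * h1 + (-(t*t*(v 0))/2) * s2sq
      rcases mul_eq_zero.1 hkey with h' | h'
      · linear_combination h'
      · exact absurd h' hv0
    have hv1n : Complex.normSq (v 1) = 2 * Complex.normSq (v 0) := by
      rw [h0]
      simp only [_root_.map_mul, Complex.normSq_ofReal, s2r]
      have : Complex.normSq t = 1 := by
        rcases mul_self_eq_one_iff.1 ht2 with rfl | rfl <;> simp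
      rw [this]; ring
    rw [hv1n] at hn'
    have hw : Complex.normSq (v 0) = 1/4 := by linarith
    rcases mul_self_eq_one_iff.1 ht2 with rfl | rfl
    · rw [h0]
      rw [show (starRingEnd ℂ) (v 0) * (1 / (Real.sqrt 3:ℂ) * Complex.exp (Complex.I * φp)) +
          (starRingEnd ℂ) ((Real.sqrt 2:ℂ) * 1 * v 0) * (1 / (Real.sqrt 3:ℂ)) +
          (starRingEnd ℂ) (v 0) * (1 / (Real.sqrt 3:ℂ) * Complex.exp (Complex.I * φm)) =
          (starRingEnd ℂ) (v 0) * (1 / (Real.sqrt 3:ℂ) *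
            (Complex.exp (Complex.I * φp) + (Real.sqrt 2:ℂ) + Complex.exp (Complex.I * φm)))
          from by simp only [_root_.map_mul, _root_.map_one, Complex.conj_ofReal]; ring,
        normSq_smul, hw]
      rw [expE, expE, show ((Real.cos φp:ℂ) + (Real.sin φp:ℂ) * Complex.I) + (Real.sqrt 2:ℂ) +
          ((Real.cos φm:ℂ) + (Real.sin φm:ℂ) * Complex.I) =
          ((Real.cos φp + Real.sqrt 2 + Real.cos φm : ℝ) : ℂ) +
            ((Real.sin φp + Real.sin φm : ℝ):ℂ) * Complex.I
          from by push_cast; ring, Complex.normSq_add_mul_I]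
      rw [show (Real.cos φp + Real.sqrt 2 + Real.cos φm)^2 + (Real.sin φp + Real.sin φm)^2 = 4
        from by linear_combination pyth φp + pyth φm + 2 * C1 + 2 * Real.sqrt 2 * C2 + s2r]
      norm_num
    · rw [h0]
      rw [show (starRingEnd ℂ) (v 0) * (1 / (Real.sqrt 3:ℂ) * Complex.exp (Complex.I * φp)) +
          (starRingEnd ℂ) ((Real.sqrt 2:ℂ) * -1 * v 0) * (1 / (Real.sqrt 3:ℂ)) +
          (starRingEnd ℂ) (v 0) * (1 / (Real.sqrt 3:ℂ) * Complex.exp (Complex.I * φm)) =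
          (starRingEnd ℂ) (v 0) * (1 / (Real.sqrt 3:ℂ) *
            (Complex.exp (Complex.I * φp) - (Real.sqrt 2:ℂ) + Complex.exp (Complex.I * φm)))
          from by simp only [_root_.map_mul, _root_.map_one, map_neg, Complex.conj_ofReal]; ring,
        normSq_smul, hw]
      rw [expE, expE, show ((Real.cos φp:ℂ) + (Real.sin φp:ℂ) * Complex.I) - (Real.sqrt 2:ℂ) +
          ((Real.cos φm:ℂ) + (Real.sin φm:ℂ) * Complex.I) =
          ((Real.cos φp - Real.sqrt 2 + Real.cos φm : ℝ) : ℂ) +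
            ((Real.sin φp + Real.sin φm : ℝ):ℂ) * Complex.I
          from by push_cast; ring, Complex.normSq_add_mul_I]
      rw [show (Real.cos φp - Real.sqrt 2 + Real.cos φm)^2 + (Real.sin φp + Real.sin φm)^2 = 4
        from by linear_combination pyth φp + pyth φm + 2 * C1 - 2 * Real.sqrt 2 * C2 + s2r]
      norm_num

lemma keyy (φp φm : ℝ)
    (C1 : Real.cos φp * Real.cos φm + Real.sin φp * Real.sin φm = 0)
    (C3 : Real.sin φp = Real.sin φm)
    (t : ℂ) (v : Fin 3 → ℂ) (h : J1y.mulVec v = t • v) (hn : ∑ i, ‖v i‖ ^ 2 = 1) :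
    ‖∑ i, star (v i) * ψspin1 φp φm i‖ ^ 2 = 1 / 3 := by
  have h0 := congrFun h 0
  have h1 := congrFun h 1
  have h2 := congrFun h 2
  simp [J1y, Matrix.mulVec, dotProduct, Fin.sum_univ_three] at h0 h1 h2
  field_simp [s2ne] at h0 h1 h2
  -- h0 : -(I * v 1) = t * v 0 * √2 ; h1 : I * v 0 + -(I * v 2) = t * v 1 * √2
  -- h2 : I * v 1 = t * v 2 * √2
  have hn' := norm_eq v hn
  rw [goal_eq]
  by_cases ht : t = 0
  · subst ht
    simp only [zero_mul, mul_zero] at h0 h1 h2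
    have hv1 : v 1 = 0 := by
      have : Complex.I * v 1 = 0 := by linear_combination -h0
      exact (mul_eq_zero.1 this).resolve_left Complex.I_ne_zero
    have hv2 : v 2 = v 0 := by
      have : Complex.I * (v 2 - v 0) = 0 := by linear_combination -h1
      have := (mul_eq_zero.1 this).resolve_left Complex.I_ne_zero
      linear_combination this
    rw [hv1, hv2] at hn' ⊢
    simp only [map_zero, zero_mul, add_zero, Complex.normSq_zero] at hn' ⊢
    have hw : Complex.normSq (v 0) = 1/2 := by linarith
    rw [show (starRingEnd ℂ) (v 0) * (1 / (Real.sqrt 3:ℂ) * Complex.exp (Complex.I * φp)) +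
        (starRingEnd ℂ) (v 0) * (1 / (Real.sqrt 3:ℂ) * Complex.exp (Complex.I * φm)) =
        (starRingEnd ℂ) (v 0) * (1 / (Real.sqrt 3:ℂ) *
          (Complex.exp (Complex.I * φp) + Complex.exp (Complex.I * φm))) from by ring,
      normSq_smul, hw]
    rw [expE, expE, show ((Real.cos φp:ℂ) + (Real.sin φp:ℂ) * Complex.I) +
        ((Real.cos φm:ℂ) + (Real.sin φm:ℂ) * Complex.I) =
        ((Real.cos φp + Real.cos φm : ℝ) : ℂ) + ((Real.sin φp + Real.sin φm : ℝ):ℂ) * Complex.I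
        from by push_cast; ring, Complex.normSq_add_mul_I]
    rw [show (Real.cos φp + Real.cos φm)^2 + (Real.sin φp + Real.sin φm)^2 = 2 from by
      linear_combination pyth φp + pyth φm + 2 * C1]
    norm_num
  · have h02 : v 2 = -v 0 := by
      have e : t * (Real.sqrt 2:ℂ) * (v 2 + v 0) = 0 := by linear_combination -h0 - h2
      rcases mul_eq_zero.1 e with e' | e'
      · rcases mul_eq_zero.1 e' with e'' | e''
        · exact absurd e'' ht
        · exact absurd e'' s2ne
      · linear_combination e'
    have hv1 : v 1 = Complex.I * t * v 0 * (Real.sqrt 2:ℂ) := by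
      linear_combination Complex.I * h0 + (v 1) * Complex.I_mul_I
    rw [h02, hv1] at h1
    have hv0 : v 0 ≠ 0 := by
      intro hz
      rw [hz] at hv1 h02
      simp only [mul_zero, zero_mul] at hv1
      rw [hv1, h02, hz] at hn'
      simp at hn'
    have ht2 : t * t = 1 := by
      have hkey : (t * t - 1) * v 0 = 0 := by
        linear_combination (Complex.I/2) * h1 + (-(t*t*(v 0))/2) * s2sq
          + ((t*t*(v 0))*((Real.sqrt 2:ℂ)*(Real.sqrt 2:ℂ))/2 - v 0) * Complex.I_mul_I
      rcases mul_eq_zero.1 hkey with h' | h'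
      · linear_combination h'
      · exact absurd h' hv0
    have hv1n : Complex.normSq (v 1) = 2 * Complex.normSq (v 0) := by
      rw [hv1]
      simp only [_root_.map_mul, Complex.normSq_ofReal, s2r, Complex.normSq_I]
      have : Complex.normSq t = 1 := by
        rcases mul_self_eq_one_iff.1 ht2 with rfl | rfl <;> simp
      rw [this]; ring
    rw [hv1n, h02, Complex.normSq_neg] at hn'
    have hw : Complex.normSq (v 0) = 1/4 := by linarith
    rcases mul_self_eq_one_iff.1 ht2 with rfl | rfl
    · rw [hv1, h02]
      rw [show (starRingEnd ℂ) (v 0) * (1 / (Real.sqrt 3:ℂ) * Complex.exp (Complex.I * φp)) +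
          (starRingEnd ℂ) (Complex.I * 1 * v 0 * (Real.sqrt 2:ℂ)) * (1 / (Real.sqrt 3:ℂ)) +
          (starRingEnd ℂ) (-v 0) * (1 / (Real.sqrt 3:ℂ) * Complex.exp (Complex.I * φm)) =
          (starRingEnd ℂ) (v 0) * (1 / (Real.sqrt 3:ℂ) *
            (Complex.exp (Complex.I * φp) - (Real.sqrt 2:ℂ) * Complex.I
              - Complex.exp (Complex.I * φm)))
          from by simp only [_root_.map_mul, _root_.map_one, map_neg, Complex.conj_ofReal,
                    Complex.conj_I]; ring,
        normSq_smul, hw]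
      rw [expE, expE, show ((Real.cos φp:ℂ) + (Real.sin φp:ℂ) * Complex.I) -
          (Real.sqrt 2:ℂ) * Complex.I -
          ((Real.cos φm:ℂ) + (Real.sin φm:ℂ) * Complex.I) =
          ((Real.cos φp - Real.cos φm : ℝ) : ℂ) +
            ((Real.sin φp - Real.sin φm - Real.sqrt 2 : ℝ):ℂ) * Complex.I
          from by push_cast; ring, Complex.normSq_add_mul_I]
      rw [show (Real.cos φp - Real.cos φm)^2 + (Real.sin φp - Real.sin φm - Real.sqrt 2)^2 = 4
        from by linear_combination pyth φp + pyth φm - 2 * C1 + s2r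
          + (-2 * Real.sqrt 2) * C3]
      norm_num
    · rw [hv1, h02]
      rw [show (starRingEnd ℂ) (v 0) * (1 / (Real.sqrt 3:ℂ) * Complex.exp (Complex.I * φp)) +
          (starRingEnd ℂ) (Complex.I * -1 * v 0 * (Real.sqrt 2:ℂ)) * (1 / (Real.sqrt 3:ℂ)) +
          (starRingEnd ℂ) (-v 0) * (1 / (Real.sqrt 3:ℂ) * Complex.exp (Complex.I * φm)) =
          (starRingEnd ℂ) (v 0) * (1 / (Real.sqrt 3:ℂ) *
            (Complex.exp (Complex.I * φp) + (Real.sqrt 2:ℂ) * Complex.I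
              - Complex.exp (Complex.I * φm)))
          from by simp only [_root_.map_mul, _root_.map_one, map_neg, Complex.conj_ofReal,
                    Complex.conj_I]; ring,
        normSq_smul, hw]
      rw [expE, expE, show ((Real.cos φp:ℂ) + (Real.sin φp:ℂ) * Complex.I) +
          (Real.sqrt 2:ℂ) * Complex.I -
          ((Real.cos φm:ℂ) + (Real.sin φm:ℂ) * Complex.I) =
          ((Real.cos φp - Real.cos φm : ℝ) : ℂ) +
            ((Real.sin φp - Real.sin φm + Real.sqrt 2 : ℝ):ℂ) * Complex.I
          from by push_cast; ring, Complex.normSq_add_mul_I]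
      rw [show (Real.cos φp - Real.cos φm)^2 + (Real.sin φp - Real.sin φm + Real.sqrt 2)^2 = 4
        from by linear_combination pyth φp + pyth φm - 2 * C1 + s2r
          + (2 * Real.sqrt 2) * C3]
      norm_num

lemma keyz (φp φm : ℝ)
    (t : ℂ) (v : Fin 3 → ℂ) (h : J1z.mulVec v = t • v) (hn : ∑ i, ‖v i‖ ^ 2 = 1) :
    ‖∑ i, star (v i) * ψspin1 φp φm i‖ ^ 2 = 1 / 3 := by
  have h0 := congrFun h 0
  have h1 := congrFun h 1
  have h2 := congrFun h 2
  simp [J1z, Matrix.mulVec, dotProduct, Fin.sum_univ_three] at h0 h1 h2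
  -- h0 : v 0 = t * v 0 ; h1 : t = 0 ∨ v 1 = 0 ; h2 : -v 2 = t * v 2
  have hn' := norm_eq v hn
  rw [goal_eq]
  rcases h1 with rfl | hv1
  · simp only [zero_mul] at h0 h2
    have hv2 : v 2 = 0 := neg_eq_zero.1 h2
    rw [h0, hv2] at hn' ⊢
    simp only [map_zero, zero_mul, add_zero, zero_add, Complex.normSq_zero] at hn' ⊢
    rw [show (starRingEnd ℂ) (v 1) * (1 / (Real.sqrt 3:ℂ)) =
        (starRingEnd ℂ) (v 1) * ((1 / (Real.sqrt 3:ℂ)) * 1) from by ring, normSq_smul]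
    rw [show Complex.normSq (v 1) = 1 from by linarith]
    simp
  · have e0 : t = 1 ∨ v 0 = 0 := by
      have : (t - 1) * v 0 = 0 := by linear_combination -h0
      rcases mul_eq_zero.1 this with h' | h'
      · exact Or.inl (by linear_combination h')
      · exact Or.inr h'
    have e2 : t = -1 ∨ v 2 = 0 := by
      have : (t + 1) * v 2 = 0 := by linear_combination -h2
      rcases mul_eq_zero.1 this with h' | h'
      · exact Or.inl (by linear_combination h')
      · exact Or.inr h'
    rcases e0 with rfl | hv0
    · have hv2 : v 2 = 0 := by
        rcases e2 with h' | h'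
        · norm_num at h'
        · exact h'
      rw [hv1, hv2] at hn' ⊢
      simp only [map_zero, zero_mul, add_zero, Complex.normSq_zero] at hn' ⊢
      rw [normSq_smul, show Complex.normSq (v 0) = 1 from by linarith, normSq_exp]
      norm_num
    · rcases e2 with rfl | hv2
      · rw [hv0, hv1] at hn' ⊢
        simp only [map_zero, zero_mul, zero_add, add_zero, Complex.normSq_zero] at hn' ⊢
        rw [normSq_smul, show Complex.normSq (v 2) = 1 from by linarith, normSq_exp]
        norm_num
      · rw [hv0, hv1, hv2] at hn'
        simp at hn'


/-- The state `(1/√3)(e^{iφ₊}|1⟩ + |0⟩ + e^{iφ₋}|−1⟩)` is unbiased in the eigenbases of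
`J_x, J_y, J_z` simultaneously iff `(φ₊, φ₋)` is, modulo `2π`, one of the four pairs
`(π/4, 3π/4), (−π/4, −3π/4), (3π/4, π/4), (−3π/4, −π/4)`: there are exactly four perfect
quantum protractors of this form for spin 1. -/
theorem spin_one_protractor_iff (φp φm : ℝ) :
    (∀ A ∈ ({J1x, J1y, J1z} : Set (Matrix (Fin 3) (Fin 3) ℂ)),
      ∀ (t : ℂ) (v : Fin 3 → ℂ), A.mulVec v = t • v → (∑ i, ‖v i‖ ^ 2 = 1) →
        ‖∑ i, star (v i) * ψspin1 φp φm i‖ ^ 2 = 1 / 3) ↔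
    (∃ a b : ℤ,
      (φp = Real.pi / 4 + 2 * Real.pi * a ∧ φm = 3 * Real.pi / 4 + 2 * Real.pi * b) ∨
      (φp = -(Real.pi / 4) + 2 * Real.pi * a ∧ φm = -(3 * Real.pi / 4) + 2 * Real.pi * b) ∨
      (φp = 3 * Real.pi / 4 + 2 * Real.pi * a ∧ φm = Real.pi / 4 + 2 * Real.pi * b) ∨
      (φp = -(3 * Real.pi / 4) + 2 * Real.pi * a ∧ φm = -(Real.pi / 4) + 2 * Real.pi * b)) := by
  constructor
  · intro hyp
    obtain ⟨C1, C2, C3⟩ := forward_trig φp φm hyp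
    exact trig_forward φp φm C1 C2 C3
  · intro h A hA t v hv hn
    obtain ⟨C1, C2, C3⟩ := trig_backward φp φm h
    simp only [Set.mem_insert_iff, Set.mem_singleton_iff] at hA
    rcases hA with rfl | rfl | rfl
    · exact keyx φp φm C1 C2 t v hv hn
    · exact keyy φp φm C1 C3 t v hv hn
    · exact keyz φp φm t v hv hn

end
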